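/- Let V ⊆ ℝ^n be a regular space with capacity c and f a feasible flow. Then any two shortest augmenting r-paths P, Q for f are conformal, i.e., P_j Q_j ≥ 0 for all j. -/

import Mathlib

open Finset Matrix

variable {n : ℕ}

/-- The support of a vector. -/
def supp (x : Fin n → ℝ) : Set (Fin n) := {j | x j ≠ 0}

/-- A nonzero vector of `V` is elementary if no nonzero vector of `V` has support
properly contained in its support. -/
def IsElementary (V : Submodule ℝ (Fin n → ℝ)) (x : Fin n → ℝ) : Prop :=
  x ∈ V ∧ x ≠ 0 ∧ ∀ y ∈ V, y ≠ 0 → ¬ (supp y ⊂ supp x)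

/-- A primitive vector: elementary with entries in `{-1, 0, 1}`. -/
def IsPrimitive (V : Submodule ℝ (Fin n → ℝ)) (x : Fin n → ℝ) : Prop :=
  IsElementary V x ∧ ∀ j, x j ∈ ({-1, 0, 1} : Set ℝ)

/-- `y` conforms to `x`. -/
def Conforms (y x : Fin n → ℝ) : Prop := ∀ j, y j ≠ 0 → y j * x j > 0

/-- A regular space: the kernel of a totally unimodular matrix. -/
def IsRegularSpace (V : Submodule ℝ (Fin n → ℝ)) : Prop :=
  ∃ (m : ℕ) (A : Matrix (Fin m) (Fin n) ℝ),
    A.IsTotallyUnimodular ∧ V = LinearMap.ker A.mulVecLin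

/-- An `r`-path: a primitive vector with value `+1` at `r`. -/
def IsRPath (V : Submodule ℝ (Fin n → ℝ)) (r : Fin n) (P : Fin n → ℝ) : Prop :=
  IsPrimitive V P ∧ P r = 1

/-- Feasibility with respect to capacity `c` (no constraint at `r`). -/
def Feasible (c : Fin n → ℝ) (r : Fin n) (f : Fin n → ℝ) : Prop :=
  ∀ j, j ≠ r → 0 ≤ f j ∧ f j ≤ c j

/-- An `r`-path `P` is augmenting for the flow `f`. -/
def Augmenting (V : Submodule ℝ (Fin n → ℝ)) (c : Fin n → ℝ) (r : Fin n)
    (f P : Fin n → ℝ) : Prop :=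
  IsRPath V r P ∧ ∃ ε : ℝ, 0 < ε ∧ Feasible c r (f + ε • P)

/-- The 1-norm. -/
def onorm (x : Fin n → ℝ) : ℝ := ∑ j, |x j|

/-- A shortest augmenting `r`-path. -/
def ShortestAug (V : Submodule ℝ (Fin n → ℝ)) (c : Fin n → ℝ) (r : Fin n)
    (f P : Fin n → ℝ) : Prop :=
  Augmenting V c r f P ∧ ∀ Q, Augmenting V c r f Q → onorm P ≤ onorm Q

/-- `g` is obtained from `f` by maximal augmentation along `P`. -/
def MaxAug (c : Fin n → ℝ) (r : Fin n) (f P g : Fin n → ℝ) : Prop :=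
  ∃ ε : ℝ, 0 < ε ∧ g = f + ε • P ∧ Feasible c r g ∧
    ∀ ε' : ℝ, ε < ε' → ¬ Feasible c r (f + ε' • P)

/-- A conformal primitive decomposition of `P + Q` in which `M` and `J` are the two
`r`-path summands (`M` playing the role of `P ∧ Q` and `J` of `P ∨ Q`). -/
def MeetJoinDecomp (V : Submodule ℝ (Fin n → ℝ)) (r : Fin n)
    (P Q M J : Fin n → ℝ) : Prop :=
  ∃ (k : ℕ) (p : Fin k → Fin n → ℝ) (a b : Fin k),
    (∀ i, IsPrimitive V (p i)) ∧ (∀ i, Conforms (p i) (P + Q)) ∧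
    (∑ i, p i) = P + Q ∧ a ≠ b ∧ p a = M ∧ p b = J ∧
    p a r = 1 ∧ p b r = 1 ∧ ∀ i, p i r = 1 → i = a ∨ i = b

lemma sign_mul_trans {a b c : ℝ} (h1 : 0 < a * b) (h2 : 0 < b * c) : 0 < a * c := by
  nlinarith [mul_pos h1 h2, mul_self_nonneg b]

lemma abs_add_lt_of_mul_neg {a b : ℝ} (h : a * b < 0) : |a + b| < |a| + |b| := by
  rcases mul_neg_iff.mp h with ⟨ha, hb⟩ | ⟨ha, hb⟩
  · rw [abs_of_pos ha, abs_of_neg hb]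
    rcases abs_cases (a + b) with ⟨h1, _⟩ | ⟨h1, _⟩ <;> linarith
  · rw [abs_of_neg ha, abs_of_pos hb]
    rcases abs_cases (a + b) with ⟨h1, _⟩ | ⟨h1, _⟩ <;> linarith

lemma abs_sum_of_sign {ι : Type*} (s : Finset ι) (t : ι → ℝ)
    (h : ∀ i ∈ s, t i ≠ 0 → 0 < t i * (∑ j ∈ s, t j)) :
    |∑ i ∈ s, t i| = ∑ i ∈ s, |t i| := by
  rcases lt_trichotomy (∑ j ∈ s, t j) 0 with hneg | hzero | hpos
  · have ht : ∀ i ∈ s, t i ≤ 0 := by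
      intro i hi
      by_contra hlt
      push_neg at hlt
      have := h i hi (ne_of_gt hlt)
      nlinarith
    rw [abs_of_nonpos hneg.le]
    rw [← Finset.sum_neg_distrib]
    exact Finset.sum_congr rfl fun i hi => (abs_of_nonpos (ht i hi)).symm
  · have ht : ∀ i ∈ s, t i = 0 := by
      intro i hi
      by_contra hne
      have := h i hi hne
      rw [hzero] at this; simp at this
    rw [hzero]
    simp only [abs_zero]
    symm
    apply Finset.sum_eq_zero
    intro i hi; rw [ht i hi, abs_zero]
  · have ht : ∀ i ∈ s, 0 ≤ t i := by
      intro i hi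
      by_contra hlt
      push_neg at hlt
      have := h i hi (ne_of_lt hlt)
      nlinarith
    rw [abs_of_nonneg hpos.le]
    exact Finset.sum_congr rfl fun i hi => (abs_of_nonneg (ht i hi)).symm

lemma exists_invertible_rows {m k : ℕ} (M : Matrix (Fin m) (Fin k) ℝ)
    (hM : LinearIndependent ℝ (fun j => Mᵀ j)) :
    ∃ f : Fin k → Fin m, Function.Injective f ∧ IsUnit (M.submatrix f id) := by
  classical
  have hrank : M.rank = k := by
    rw [Matrix.rank_eq_finrank_span_cols]
    have := finrank_span_eq_card hM
    rw [Fintype.card_fin] at this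
    exact this
  have hspan : Submodule.span ℝ (Set.range (fun i => M i)) = ⊤ := by
    have h1 : Mᵀ.rank = k := by rw [Matrix.rank_transpose]; exact hrank
    rw [Matrix.rank_eq_finrank_span_cols] at h1
    change Module.finrank ℝ (Submodule.span ℝ (Set.range fun i => M i)) = k at h1
    apply Submodule.eq_top_of_finrank_eq
    rw [h1, Module.finrank_pi]
    simp
  obtain ⟨b, hbsub, hbspan, hbli⟩ := exists_linearIndependent ℝ (Set.range fun i => M i)
  rw [hspan] at hbspan
  haveI : Fintype b := (Set.Finite.subset (Set.finite_range _) hbsub).fintype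
  have hfr : Module.finrank ℝ (Fin k → ℝ) = k := by rw [Module.finrank_pi]; simp
  have hbcard : Fintype.card b = k := by
    let B : Module.Basis b ℝ (Fin k → ℝ) := Module.Basis.mk hbli (by rw [Subtype.range_coe, hbspan])
    have := Module.finrank_eq_card_basis B
    omega
  let e : b ≃ Fin k := Fintype.equivFinOfCardEq hbcard
  have hch : ∀ x : b, ∃ i : Fin m, M i = (x : Fin k → ℝ) := fun x => hbsub x.2
  choose ch hch' using hch
  refine ⟨fun i => ch (e.symm i), ?_, ?_⟩
  · intro i i' hii
    simp only [] at hii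
    have : M (ch (e.symm i)) = M (ch (e.symm i')) := by rw [hii]
    rw [hch', hch'] at this
    have := Subtype.coe_injective this
    exact e.symm.injective this
  · rw [← Matrix.linearIndependent_rows_iff_isUnit]
    have : (fun i => (M.submatrix (fun i => ch (e.symm i)) id) i)
        = fun i => ((e.symm i : b) : Fin k → ℝ) := by
      funext i
      ext j
      simp [Matrix.submatrix_apply, hch' (e.symm i)]
    show LinearIndependent ℝ (fun i => (M.submatrix (fun i => ch (e.symm i)) id) i)
    rw [this]
    exact hbli.comp e.symm e.symm.injective

lemma abs_of_signType (a : ℝ) (h : a ∈ Set.range (SignType.cast : SignType → ℝ)) :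
    |a| = 0 ∨ |a| = 1 := by
  obtain ⟨st, rfl⟩ := h
  cases st <;> simp

lemma exists_elem_conf (V : Submodule ℝ (Fin n → ℝ)) {x : Fin n → ℝ}
    (hx : x ∈ V) (hx0 : x ≠ 0) :
    ∃ y, IsElementary V y ∧ (∀ j, y j ≠ 0 → 0 < y j * x j) := by
  classical
  set C : Set (Fin n → ℝ) :=
    {y | y ∈ V ∧ y ≠ 0 ∧ ∀ j, y j ≠ 0 → 0 < y j * x j} with hC
  have hxC : x ∈ C := ⟨hx, hx0, fun j hj => mul_self_pos.mpr hj⟩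
  set S : Set ℕ := {k | ∃ y ∈ C, (supp y).ncard = k} with hS
  have hSne : S.Nonempty := ⟨_, x, hxC, rfl⟩
  obtain ⟨y, hyC, hycard⟩ := Nat.sInf_mem hSne
  refine ⟨y, ⟨hyC.1, hyC.2.1, ?_⟩, hyC.2.2⟩
  intro z hzV hz0 hss
  obtain ⟨j1, hj1y, hj1z⟩ := Set.exists_of_ssubset hss
  have hzsub : ∀ j, z j ≠ 0 → y j ≠ 0 := fun j hj => hss.subset hj
  obtain ⟨j0, hj0⟩ : ∃ j, z j ≠ 0 := by
    by_contra h
    push_neg at h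
    exact hz0 (funext fun j => h j)
  have hy0 : y j0 ≠ 0 := hzsub j0 hj0
  obtain ⟨w, hwV, hw0, hwsupp, jn, hjn⟩ :
      ∃ w, w ∈ V ∧ w ≠ 0 ∧ (∀ j, w j ≠ 0 ↔ z j ≠ 0) ∧ ∃ jn, w jn * y jn < 0 := by
    rcases lt_or_gt_of_ne (mul_ne_zero hj0 hy0) with h | h
    · exact ⟨z, hzV, hz0, fun j => Iff.rfl, j0, h⟩
    · refine ⟨-z, neg_mem hzV, neg_ne_zero.mpr hz0, fun j => by simp, j0, ?_⟩
      simp only [Pi.neg_apply, neg_mul]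
      linarith
  have hwsub : ∀ j, w j ≠ 0 → y j ≠ 0 := fun j hj => hzsub j ((hwsupp j).mp hj)
  set D : Finset (Fin n) := Finset.univ.filter (fun j => w j * y j < 0) with hD
  have hjnD : jn ∈ D := by simp [hD, hjn]
  obtain ⟨jm, hjmD, hjmin⟩ := D.exists_min_image (fun j => -(y j)/(w j)) ⟨jn, hjnD⟩
  have hjm : w jm * y jm < 0 := by simpa [hD] using hjmD
  have hwjm : w jm ≠ 0 := fun h => by simp [h] at hjm
  have hyjm : y jm ≠ 0 := fun h => by simp [h] at hjm
  set t : ℝ := -(y jm)/(w jm) with ht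
  have htpos : 0 < t := by
    rcases mul_neg_iff.mp hjm with ⟨hp, hn⟩ | ⟨hn, hp⟩
    · exact div_pos (by linarith) hp
    · exact div_pos_of_neg_of_neg (by linarith) hn
  set y' : Fin n → ℝ := y + t • w with hy'
  have hy'V : y' ∈ V := add_mem hyC.1 (Submodule.smul_mem V t hwV)
  have key : ∀ j, (y' j ≠ 0 → 0 < y' j * y j) ∧ (y j = 0 → y' j = 0) := by
    intro j
    by_cases hwj : w j = 0
    · constructor
      · intro hne
        have he : y' j = y j := by simp [hy', hwj]
        rw [he] at hne ⊢
        exact mul_self_pos.mpr hne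
      · intro hyj; simp [hy', hwj, hyj]
    · have hyj : y j ≠ 0 := hwsub j hwj
      refine ⟨?_, fun h => absurd h hyj⟩
      intro hne
      have hge : 0 ≤ y' j * y j := by
        have hexp : y' j * y j = y j * y j + t * (w j * y j) := by
          simp only [hy', Pi.add_apply, Pi.smul_apply, smul_eq_mul]
          ring
        rcases lt_or_ge (w j * y j) 0 with hneg | hpos
        · have hjD : j ∈ D := by simp [hD, hneg]
          have hle : t ≤ -(y j)/(w j) := hjmin j hjD
          have hcalc : (-(y j)/(w j)) * (w j * y j) = -(y j * y j) := by
            field_simp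
          nlinarith [mul_le_mul_of_nonpos_right hle (le_of_lt hneg)]
        · nlinarith [mul_self_nonneg (y j)]
      exact lt_of_le_of_ne hge (Ne.symm (mul_ne_zero hne hyj))
  have hym : y' jm = 0 := by
    simp only [hy', Pi.add_apply, Pi.smul_apply, smul_eq_mul, ht]
    field_simp
    ring
  have hy'0 : y' ≠ 0 := by
    intro h
    have hwj1 : w j1 = 0 := by
      by_contra hne
      exact hj1z ((hwsupp j1).mp hne)
    have he : y' j1 = y j1 := by simp [hy', hwj1]
    rw [h] at he
    exact hj1y (by simpa using he.symm)
  have hy'C : y' ∈ C := by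
    refine ⟨hy'V, hy'0, fun j hj => ?_⟩
    have h1 := (key j).1 hj
    have hyj : y j ≠ 0 := by
      intro h; exact hj ((key j).2 h)
    exact sign_mul_trans h1 (hyC.2.2 j hyj)
  have hss' : supp y' ⊂ supp y := by
    constructor
    · intro j hj
      simp only [supp, Set.mem_setOf_eq] at hj ⊢
      intro h; exact hj ((key j).2 h)
    · intro hsub
      exact (hsub (show jm ∈ supp y from hyjm)) hym
  have hlt : (supp y').ncard < (supp y).ncard :=
    Set.ncard_lt_ncard hss' (Set.toFinite _)
  have hge : sInf S ≤ (supp y').ncard := Nat.sInf_le ⟨y', hy'C, rfl⟩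
  omega

lemma conf_decomp_aux (V : Submodule ℝ (Fin n → ℝ)) :
    ∀ (N : ℕ) (x : Fin n → ℝ), x ∈ V → (supp x).ncard ≤ N →
    ∃ (k : ℕ) (α : Fin k → ℝ) (p : Fin k → Fin n → ℝ),
      (∀ i, 0 < α i ∧ IsElementary V (p i) ∧ (∀ j, p i j ≠ 0 → 0 < p i j * x j)) ∧
      (∑ i, α i • p i) = x := by
  classical
  intro N
  induction N with
  | zero =>
    intro x hxV hcard
    refine ⟨0, Fin.elim0, Fin.elim0, fun i => i.elim0, ?_⟩
    have : supp x = ∅ := by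
      rw [← Set.ncard_eq_zero (Set.toFinite _)]
      omega
    have hx0 : x = 0 := by
      funext j
      by_contra hj
      exact absurd (show j ∈ supp x from hj) (by rw [this]; exact Set.notMem_empty j)
    simp [hx0]
  | succ N ih =>
    intro x hxV hcard
    by_cases hx0 : x = 0
    · refine ⟨0, Fin.elim0, Fin.elim0, fun i => i.elim0, by simp [hx0]⟩
    obtain ⟨y, hyEl, hyconf⟩ := exists_elem_conf V hxV hx0
    set D : Finset (Fin n) := Finset.univ.filter (fun j => y j ≠ 0) with hD
    have hDne : D.Nonempty := by
      obtain ⟨j, hj⟩ : ∃ j, y j ≠ 0 := by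
        by_contra h
        push_neg at h
        exact hyEl.2.1 (funext fun j => h j)
      exact ⟨j, by simp [hD, hj]⟩
    obtain ⟨jm, hjmD, hjmin⟩ := D.exists_min_image (fun j => x j / y j) hDne
    have hyjm : y jm ≠ 0 := by simpa [hD] using hjmD
    set α0 : ℝ := x jm / y jm with hα0
    have hα0pos : 0 < α0 := by
      rcases mul_pos_iff.mp (hyconf jm hyjm) with ⟨h1, h2⟩ | ⟨h1, h2⟩
      · exact div_pos h2 h1
      · exact div_pos_of_neg_of_neg h2 h1
    set x' : Fin n → ℝ := x - α0 • y with hx'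
    have hx'V : x' ∈ V := sub_mem hxV (Submodule.smul_mem V α0 hyEl.1)
    -- weak conformity of x' to x, and support shrinking
    have key : ∀ j, 0 ≤ x' j * x j ∧ (x j = 0 → x' j = 0) := by
      intro j
      by_cases hyj : y j = 0
      · have he : x' j = x j := by simp [hx', hyj]
        rw [he]
        exact ⟨mul_self_nonneg _, fun h => h⟩
      · have hconf := hyconf j hyj
        have hxj : x j ≠ 0 := fun h => by simp [h] at hconf
        refine ⟨?_, fun h => absurd h hxj⟩
        have hexp : x' j * x j = x j * x j - α0 * (y j * x j) := by
          simp only [hx', Pi.sub_apply, Pi.smul_apply, smul_eq_mul]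
          ring
        have hjD : j ∈ D := by simp [hD, hyj]
        have hle : α0 ≤ x j / y j := hjmin j hjD
        have hcalc : (x j / y j) * (y j * x j) = x j * x j := by
          field_simp
        nlinarith [mul_le_mul_of_nonneg_right hle (le_of_lt hconf)]
    have hxm' : x' jm = 0 := by
      simp only [hx', Pi.sub_apply, Pi.smul_apply, smul_eq_mul, hα0]
      field_simp
      ring
    have hxjm : x jm ≠ 0 := by
      have := hyconf jm hyjm
      intro h; rw [h] at this; nlinarith
    have hss : supp x' ⊂ supp x := by
      constructor
      · intro j hj
        simp only [supp, Set.mem_setOf_eq] at hj ⊢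
        intro h; exact hj ((key j).2 h)
      · intro hsub
        exact (hsub (show jm ∈ supp x from hxjm)) hxm'
    have hcard' : (supp x').ncard ≤ N := by
      have := Set.ncard_lt_ncard hss (Set.toFinite _)
      omega
    obtain ⟨k, α, p, hp, hsum⟩ := ih x' hx'V hcard'
    refine ⟨k + 1, Fin.cons α0 α, Fin.cons y p, ?_, ?_⟩
    · intro i
      refine Fin.cases ?_ ?_ i
      · exact ⟨hα0pos, hyEl, hyconf⟩
      · intro i'
        refine ⟨(hp i').1, (hp i').2.1, fun j hj => ?_⟩
        have h1 := (hp i').2.2 j hj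
        have hx'j : x' j ≠ 0 := fun h => by rw [h] at h1; simp at h1
        have hxj : x j ≠ 0 := fun h => hx'j ((key j).2 h)
        have h2 : 0 < x' j * x j :=
          lt_of_le_of_ne (key j).1 (Ne.symm (mul_ne_zero hx'j hxj))
        exact sign_mul_trans h1 h2
    · rw [Fin.sum_univ_succ]
      simp only [Fin.cons_zero, Fin.cons_succ, hsum]
      rw [hx']
      abel

lemma tu_elementary_abs_eq {m : ℕ} {A : Matrix (Fin m) (Fin n) ℝ}
    (hA : A.IsTotallyUnimodular) {y : Fin n → ℝ}
    (hy : IsElementary (LinearMap.ker A.mulVecLin) y) :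
    ∀ j j', y j ≠ 0 → y j' ≠ 0 → |y j| = |y j'| := by
  classical
  obtain ⟨hyV, hy0, hymin⟩ := hy
  obtain ⟨s, hs⟩ : ∃ s, y s ≠ 0 := by
    by_contra h
    push_neg at h
    exact hy0 (funext fun j => h j)
  suffices hkey : ∀ j, y j ≠ 0 → |y j| = |y s| by
    intro j j' hj hj'
    rw [hkey j hj, hkey j' hj']
  set Sf : Finset (Fin n) := Finset.univ.filter (fun j => y j ≠ 0) with hSf
  have hsS : s ∈ Sf := by simp [hSf, hs]
  set T : Finset (Fin n) := Sf.erase s with hT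
  set k : ℕ := T.card with hk
  set g : Fin k → Fin n := fun i => (T.orderIsoOfFin rfl i : Fin n) with hg
  have hginj : Function.Injective g := fun a b hab =>
    (T.orderIsoOfFin rfl).injective (Subtype.ext hab)
  have hgT : ∀ i, g i ∈ T := fun i => (T.orderIsoOfFin rfl i).2
  have hgsurj : ∀ j ∈ T, ∃ i, g i = j := fun j hj =>
    ⟨(T.orderIsoOfFin rfl).symm ⟨j, hj⟩,
      congrArg Subtype.val ((T.orderIsoOfFin rfl).apply_symm_apply ⟨j, hj⟩)⟩
  have hsT : s ∉ T := Finset.notMem_erase s Sf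
  have hTy : ∀ i, y (g i) ≠ 0 := fun i => by
    have := Finset.mem_of_mem_erase (hgT i)
    simpa [hSf] using this
  have hyA : A.mulVec y = 0 := hyV
  -- columns of A indexed by T are linearly independent
  have hcols : LinearIndependent ℝ (fun i => (A.submatrix id g)ᵀ i) := by
    rw [Fintype.linearIndependent_iff]
    intro β hβ
    set w : Fin n → ℝ := ∑ i, β i • (Pi.single (g i) (1 : ℝ) : Fin n → ℝ) with hw
    have hwval : ∀ i, w (g i) = β i := by
      intro i
      simp only [hw, Finset.sum_apply, Pi.smul_apply, smul_eq_mul]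
      rw [Finset.sum_eq_single i]
      · simp
      · intro i' _ hne
        have hne2 : g i ≠ g i' := fun h => hne (hginj h).symm
        simp [Pi.single_apply, hne2]
      · intro h; exact absurd (Finset.mem_univ i) h
    have hwsupp : ∀ j, w j ≠ 0 → j ∈ T := by
      intro j hj
      by_contra hjT
      apply hj
      simp only [hw, Finset.sum_apply, Pi.smul_apply, smul_eq_mul]
      apply Finset.sum_eq_zero
      intro i _
      have hne : j ≠ g i := fun h => hjT (h ▸ hgT i)
      simp [Pi.single_apply, hne]
    have hwker : w ∈ LinearMap.ker A.mulVecLin := by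
      rw [LinearMap.mem_ker, hw, map_sum]
      have : ∀ i, A.mulVecLin (β i • (Pi.single (g i) (1 : ℝ) : Fin n → ℝ))
          = β i • (A.submatrix id g)ᵀ i := by
        intro i
        rw [_root_.map_smul]
        congr 1
        rw [mulVecLin_apply, mulVec_single]
        funext r
        simp [Matrix.transpose_apply, Matrix.submatrix_apply]
      rw [Finset.sum_congr rfl (fun i _ => this i)]
      exact hβ
    have hwzero : w = 0 := by
      by_contra hw0
      apply hymin w hwker hw0
      constructor
      · intro j hj
        have hjT := hwsupp j hj
        have := Finset.mem_of_mem_erase hjT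
        simpa [hSf, supp] using this
      · intro hsub
        have : w s ≠ 0 := hsub (show s ∈ supp y from hs)
        exact hsT (hwsupp s this)
    intro i
    rw [← hwval i, hwzero]
    rfl
  obtain ⟨f, hfinj, hfunit⟩ := exists_invertible_rows (A.submatrix id g) hcols
  have hBsub : (A.submatrix id g).submatrix f id = A.submatrix f g := by
    rw [Matrix.submatrix_submatrix]
    rfl
  set B : Matrix (Fin k) (Fin k) ℝ := A.submatrix f g with hB
  rw [hBsub] at hfunit
  have hdetB : B.det ≠ 0 := by
    intro h
    have := (Matrix.isUnit_iff_isUnit_det B).mp hfunit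
    rw [h] at this
    exact this.ne_zero rfl
  have habsB : |B.det| = 1 := by
    rcases abs_of_signType B.det (hA k f g hfinj hginj) with h | h
    · exact absurd (abs_eq_zero.mp h) hdetB
    · exact h
  -- the key linear relation
  set v : Fin k → ℝ := fun i => y (g i) with hv
  set c : Fin k → ℝ := fun i => A (f i) s with hc
  have heq : B.mulVec v = (-(y s)) • c := by
    funext i
    have hrow : ∑ j, A (f i) j * y j = 0 := congrFun hyA (f i)
    have h1 : ∑ j ∈ Sf, A (f i) j * y j = ∑ j, A (f i) j * y j := by
      apply Finset.sum_subset (Finset.subset_univ Sf)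
      intro j _ hjS
      have : y j = 0 := by
        by_contra hne
        exact hjS (by simp [hSf, hne])
      rw [this, mul_zero]
    have h2 : Sf = insert s T := (Finset.insert_erase hsS).symm
    have h3 : ∑ j ∈ Sf, A (f i) j * y j
        = A (f i) s * y s + ∑ j ∈ T, A (f i) j * y j := by
      rw [h2, Finset.sum_insert hsT]
    have h4 : ∑ j ∈ T, A (f i) j * y j = ∑ i', A (f i) (g i') * y (g i') := by
      symm
      apply Finset.sum_bij (fun i' _ => g i')
      · intro i' _; exact hgT i'
      · intro a _ b _ hab; exact hginj hab
      · intro j hj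
        obtain ⟨i', hi'⟩ := hgsurj j hj
        exact ⟨i', Finset.mem_univ i', hi'⟩
      · intro i' _; rfl
    have : A (f i) s * y s + ∑ i', A (f i) (g i') * y (g i') = 0 := by
      rw [← h4, ← h3, h1, hrow]
    simp only [Matrix.mulVec, dotProduct, hB, Matrix.submatrix_apply, hv,
      Pi.smul_apply, smul_eq_mul, hc]
    linarith
  have hcram : B.det • v = Matrix.cramer B ((-(y s)) • c) := by
    rw [← heq, Matrix.cramer_eq_adjugate_mulVec, Matrix.mulVec_mulVec,
      Matrix.adjugate_mul, Matrix.smul_mulVec, Matrix.one_mulVec]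
  -- conclude entrywise
  have hentry : ∀ i : Fin k, |y (g i)| = |y s| * |(B.updateCol i c).det| := by
    intro i
    have h1 : B.det * y (g i) = -(y s) * (B.updateCol i c).det := by
      have := congrFun hcram i
      simp only [Pi.smul_apply, smul_eq_mul] at this
      rw [_root_.map_smul] at this
      simp only [Pi.smul_apply, smul_eq_mul, Matrix.cramer_apply] at this
      exact this
    have := congrArg abs h1
    rw [abs_mul, abs_mul, habsB, one_mul, abs_neg] at this
    exact this
  have hupd : ∀ i : Fin k, B.updateCol i c = A.submatrix f (Function.update g i s) := by
    intro i
    funext i' j'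
    rw [Matrix.updateCol_apply]
    simp only [Matrix.submatrix_apply, Function.update_apply, hB, hc]
    split_ifs <;> rfl
  have hupdinj : ∀ i : Fin k, Function.Injective (Function.update g i s) := by
    intro i a b hab
    simp only [Function.update_apply] at hab
    split_ifs at hab with h1 h2 h2
    · rw [h1, h2]
    · exact absurd (hab ▸ hgT b) hsT
    · exact absurd (hab ▸ hgT a) hsT
    · exact hginj hab
  have hTabs : ∀ i : Fin k, |y (g i)| = |y s| := by
    intro i
    have h1 := hentry i
    rw [hupd i] at h1
    rcases abs_of_signType _ (hA k f (Function.update g i s) hfinj (hupdinj i)) with h | h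
    · rw [h, mul_zero] at h1
      exact absurd (abs_eq_zero.mp h1) (hTy i)
    · rw [h, mul_one] at h1
      exact h1
  intro j hj
  have hjS : j ∈ Sf := by simp [hSf, hj]
  by_cases hjs : j = s
  · rw [hjs]
  · have hjT : j ∈ T := Finset.mem_erase.mpr ⟨hjs, hjS⟩
    obtain ⟨i, hi⟩ := hgsurj j hjT
    rw [← hi]
    exact hTabs i

lemma regular_decomp (V : Submodule ℝ (Fin n → ℝ)) (hV : IsRegularSpace V)
    {x : Fin n → ℝ} (hx : x ∈ V) :
    ∃ (k : ℕ) (α : Fin k → ℝ) (p : Fin k → Fin n → ℝ),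
      (∀ i, 0 < α i ∧ IsPrimitive V (p i) ∧ Conforms (p i) x) ∧
      (∑ i, α i • p i) = x := by
  classical
  obtain ⟨m, A, hATU, hVA⟩ := hV
  obtain ⟨k, α, p, hp, hsum⟩ := conf_decomp_aux V ((supp x).ncard) x hx le_rfl
  have hchoice : ∀ i, ∃ j, p i j ≠ 0 := by
    intro i
    by_contra h
    push_neg at h
    exact (hp i).2.1.2.1 (funext fun j => h j)
  choose jc hjc using hchoice
  set βs : Fin k → ℝ := fun i => |p i (jc i)| with hβs
  have hβpos : ∀ i, 0 < βs i := fun i => abs_pos.mpr (hjc i)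
  have habs : ∀ i j, p i j ≠ 0 → |p i j| = βs i := by
    intro i j hj
    have hel : IsElementary (LinearMap.ker A.mulVecLin) (p i) := hVA ▸ (hp i).2.1
    exact tu_elementary_abs_eq hATU hel j (jc i) hj (hjc i)
  refine ⟨k, fun i => α i * βs i, fun i => (βs i)⁻¹ • p i, ?_, ?_⟩
  · intro i
    have hβne : βs i ≠ 0 := (hβpos i).ne'
    have hsupp : ∀ j, ((βs i)⁻¹ • p i) j ≠ 0 ↔ p i j ≠ 0 := by
      intro j
      simp only [Pi.smul_apply, smul_eq_mul, mul_ne_zero_iff]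
      constructor
      · exact fun h => h.2
      · exact fun h => ⟨inv_ne_zero hβne, h⟩
    refine ⟨mul_pos (hp i).1 (hβpos i), ⟨⟨Submodule.smul_mem V _ (hp i).2.1.1, ?_, ?_⟩, ?_⟩, ?_⟩
    · intro h
      apply hjc i
      have := congrFun h (jc i)
      simp only [Pi.smul_apply, smul_eq_mul, Pi.zero_apply] at this
      rcases mul_eq_zero.mp this with h' | h'
      · exact absurd h' (inv_ne_zero hβne)
      · exact h'
    · intro z hzV hz0 hss
      apply (hp i).2.1.2.2 z hzV hz0
      have : supp ((βs i)⁻¹ • p i) = supp (p i) := Set.ext fun j => hsupp j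
      rwa [this] at hss
    · -- entries in {-1, 0, 1}
      intro j
      simp only [Set.mem_insert_iff, Set.mem_singleton_iff]
      rcases eq_or_ne (p i j) 0 with h | h
      · right; left
        simp [h]
      · have habsj := habs i j h
        rcases (abs_eq (hβpos i).le).mp habsj with h' | h'
        · right; right
          simp only [Pi.smul_apply, smul_eq_mul, h']
          field_simp
        · left
          simp only [Pi.smul_apply, smul_eq_mul, h']
          field_simp
    · -- Conforms
      intro j hj
      have hpj : p i j ≠ 0 := (hsupp j).mp hj
      have hc := (hp i).2.2 j hpj
      simp only [Pi.smul_apply, smul_eq_mul]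
      rw [mul_assoc]
      exact mul_pos (inv_pos.mpr (hβpos i)) hc
  · rw [← hsum]
    apply Finset.sum_congr rfl
    intro i _
    rw [smul_smul, mul_assoc, mul_inv_cancel₀ (hβpos i).ne', mul_one]

set_option maxHeartbeats 1000000 in
theorem stmt11 (V : Submodule ℝ (Fin n → ℝ)) (hV : IsRegularSpace V)
    (r : Fin n) (c : Fin n → ℝ) (hc : ∀ j, j ≠ r → 0 ≤ c j)
    (f : Fin n → ℝ) (hfV : f ∈ V) (hf : Feasible c r f)
    (P Q : Fin n → ℝ)
    (hP : ShortestAug V c r f P) (hQ : ShortestAug V c r f Q) :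
    ∀ j, 0 ≤ P j * Q j := by
  classical
  intro j0
  by_contra hcon
  push_neg at hcon
  obtain ⟨⟨⟨⟨hPel, hPpm⟩, hPr⟩, εP, hεP, hfP⟩, hPmin⟩ := hP
  obtain ⟨⟨⟨⟨hQel, hQpm⟩, hQr⟩, εQ, hεQ, hfQ⟩, hQmin⟩ := hQ
  set x : Fin n → ℝ := P + Q with hx
  have hxV : x ∈ V := add_mem hPel.1 hQel.1
  have hxr : x r = 2 := by simp [hx, hPr, hQr]; norm_num
  obtain ⟨k, α, p, hdec, hsum⟩ := regular_decomp V hV hxV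
  set ε : ℝ := min εP εQ with hε
  have hεpos : 0 < ε := lt_min hεP hεQ
  -- each piece with value 1 at r is an augmenting r-path
  have haug : ∀ i, p i r = 1 → Augmenting V c r f (p i) := by
    intro i hir
    refine ⟨⟨(hdec i).2.1, hir⟩, ε, hεpos, ?_⟩
    intro j hjr
    have hfj := hf j hjr
    have hpm := (hdec i).2.1.2 j
    simp only [Set.mem_insert_iff, Set.mem_singleton_iff] at hpm
    rcases hpm with hm1 | h0 | h1
    · -- p i j = -1 : need P j = -1 or Q j = -1
      have hconf : 0 < p i j * x j := (hdec i).2.2 j (by rw [hm1]; norm_num)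
      rw [hm1] at hconf
      have hxneg : x j < 0 := by nlinarith
      have hPQ : P j = -1 ∨ Q j = -1 := by
        have hP' := hPpm j
        have hQ' := hQpm j
        simp only [Set.mem_insert_iff, Set.mem_singleton_iff] at hP' hQ'
        simp only [hx, Pi.add_apply] at hxneg
        rcases hP' with h | h | h <;> rcases hQ' with h' | h' | h' <;>
          first
            | (left; exact h)
            | (right; exact h')
            | (exfalso; rw [h, h'] at hxneg; norm_num at hxneg)
      have hflow : ε ≤ f j := by
        rcases hPQ with h | h
        · have := (hfP j hjr).1
          simp only [Pi.add_apply, Pi.smul_apply, smul_eq_mul, h] at this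
          have h2 : εP ≤ f j := by linarith
          exact le_trans (min_le_left _ _) h2
        · have := (hfQ j hjr).1
          simp only [Pi.add_apply, Pi.smul_apply, smul_eq_mul, h] at this
          have h2 : εQ ≤ f j := by linarith
          exact le_trans (min_le_right _ _) h2
      constructor
      · simp only [Pi.add_apply, Pi.smul_apply, smul_eq_mul, hm1]
        linarith
      · simp only [Pi.add_apply, Pi.smul_apply, smul_eq_mul, hm1]
        linarith [hfj.2, hεpos]
    · constructor <;> simp only [Pi.add_apply, Pi.smul_apply, smul_eq_mul, h0] <;>
        [linarith [hfj.1]; linarith [hfj.2]]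
    · -- p i j = 1 : need P j = 1 or Q j = 1
      have hconf : 0 < p i j * x j := (hdec i).2.2 j (by rw [h1]; norm_num)
      rw [h1] at hconf
      have hxpos : 0 < x j := by nlinarith
      have hPQ : P j = 1 ∨ Q j = 1 := by
        have hP' := hPpm j
        have hQ' := hQpm j
        simp only [Set.mem_insert_iff, Set.mem_singleton_iff] at hP' hQ'
        simp only [hx, Pi.add_apply] at hxpos
        rcases hP' with h | h | h <;> rcases hQ' with h' | h' | h' <;>
          first
            | (left; exact h)
            | (right; exact h')
            | (exfalso; rw [h, h'] at hxpos; norm_num at hxpos)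
      have hflow : f j + ε ≤ c j := by
        rcases hPQ with h | h
        · have := (hfP j hjr).2
          simp only [Pi.add_apply, Pi.smul_apply, smul_eq_mul, h] at this
          have h2 : f j + εP ≤ c j := by linarith
          have := min_le_left εP εQ
          linarith
        · have := (hfQ j hjr).2
          simp only [Pi.add_apply, Pi.smul_apply, smul_eq_mul, h] at this
          have h2 : f j + εQ ≤ c j := by linarith
          have := min_le_right εP εQ
          linarith
      constructor
      · simp only [Pi.add_apply, Pi.smul_apply, smul_eq_mul, h1]
        linarith [hfj.1, hεpos]
      · simp only [Pi.add_apply, Pi.smul_apply, smul_eq_mul, h1]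
        linarith
  -- the value at r of each piece is 0 or 1
  have hval_r : ∀ i, p i r = 0 ∨ p i r = 1 := by
    intro i
    have hpm := (hdec i).2.1.2 r
    simp only [Set.mem_insert_iff, Set.mem_singleton_iff] at hpm
    rcases hpm with hm1 | h0 | h1
    · exfalso
      have hconf : 0 < p i r * x r := (hdec i).2.2 r (by rw [hm1]; norm_num)
      rw [hm1, hxr] at hconf
      norm_num at hconf
    · left; exact h0
    · right; exact h1
  set F : Finset (Fin k) := Finset.univ.filter (fun i => p i r = 1) with hF
  -- total weight at r is 2
  have hsum_r : ∑ i ∈ F, α i = 2 := by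
    have hs := congrFun hsum r
    simp only [Finset.sum_apply, Pi.smul_apply, smul_eq_mul] at hs
    rw [hxr] at hs
    rw [← hs, hF, Finset.sum_filter]
    apply Finset.sum_congr rfl
    intro i _
    rcases hval_r i with h | h
    · rw [h, if_neg (by norm_num), mul_zero]
    · rw [h, if_pos rfl, mul_one]
  -- norm decomposition
  have hnorm_x : onorm x = ∑ i, α i * onorm (p i) := by
    unfold onorm
    have hptwise : ∀ j, |x j| = ∑ i, α i * |p i j| := by
      intro j
      have hxj : x j = ∑ i, α i * p i j := by
        have := congrFun hsum j
        simp only [Finset.sum_apply, Pi.smul_apply, smul_eq_mul] at this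
        exact this.symm
      rw [hxj]
      rw [abs_sum_of_sign]
      · apply Finset.sum_congr rfl
        intro i _
        rw [abs_mul, abs_of_pos (hdec i).1]
      · intro i _ hne
        have hpij : p i j ≠ 0 := by
          intro h; rw [h, mul_zero] at hne; exact hne rfl
        have hconf := (hdec i).2.2 j hpij
        rw [← hxj]
        have := (hdec i).1
        nlinarith
    rw [Finset.sum_congr rfl (fun j _ => hptwise j)]
    rw [Finset.sum_comm]
    apply Finset.sum_congr rfl
    intro i _
    rw [Finset.mul_sum]
  have honorm_nonneg : ∀ z : Fin n → ℝ, 0 ≤ onorm z := by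
    intro z
    apply Finset.sum_nonneg
    intro j _
    exact abs_nonneg _
  -- strict inequality from non-conformality at j0
  have hlt : onorm x < onorm P + onorm Q := by
    unfold onorm
    rw [← Finset.sum_add_distrib]
    apply Finset.sum_lt_sum
    · intro j _
      exact abs_add_le _ _
    · exact ⟨j0, Finset.mem_univ j0, abs_add_lt_of_mul_neg hcon⟩
  -- lower bound via shortest paths
  have hbound : onorm P + onorm Q ≤ ∑ i, α i * onorm (p i) := by
    have h1 : ∀ i ∈ F, (onorm P + onorm Q) / 2 ≤ onorm (p i) := by
      intro i hi
      have hir : p i r = 1 := by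
        simp only [hF, Finset.mem_filter] at hi
        exact hi.2
      have hA := haug i hir
      have := hPmin (p i) hA
      have := hQmin (p i) hA
      linarith
    have h2 : ∑ i ∈ F, α i * ((onorm P + onorm Q) / 2) ≤ ∑ i ∈ F, α i * onorm (p i) := by
      apply Finset.sum_le_sum
      intro i hi
      exact mul_le_mul_of_nonneg_left (h1 i hi) (hdec i).1.le
    have h3 : ∑ i ∈ F, α i * ((onorm P + onorm Q) / 2)
        = (onorm P + onorm Q) := by
      rw [← Finset.sum_mul, hsum_r]
      ring
    have h4 : ∑ i ∈ F, α i * onorm (p i) ≤ ∑ i, α i * onorm (p i) := by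
      apply Finset.sum_le_sum_of_subset_of_nonneg (Finset.subset_univ F)
      intro i _ _
      exact mul_nonneg (hdec i).1.le (honorm_nonneg (p i))
    linarith
  rw [hnorm_x] at hlt
  linarith
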